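/- Let F be a fractal subset of [0,1] with complementary intervals (I_n) satisfying the lacunarity condition with some constant λ ∈ (0,1]. Then −∞ < liminf_{n→∞} log|I_n| / log n ≤ limsup_{n→∞} log|I_n| / log n ≤ −1. -/

import Mathlib

open MeasureTheory Filter Set
open scoped Classical

noncomputable section

/-- The enlargement `B̄^a` of the interval `[s,t]` by the factor `1+a` about its centre. -/
def enlarge (a s t : ℝ) : Set ℝ :=
  Set.Icc (s - a * (t - s) / 2) (t + a * (t - s) / 2)

/-- The moment sum `Σ_{B ∈ B_r^*} μ(B̄^a)^q` over grid intervals of length `r`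
whose interior meets the support of `μ` (i.e. with `μ(B) > 0`). -/
def gridSum (μ : Measure ℝ) (a q R : ℝ) : ℝ :=
  ∑' m : ℤ, if 0 < μ (Set.Icc ((m : ℝ) * R) (((m : ℝ) + 1) * R))
    then (μ (enlarge a ((m : ℝ) * R) (((m : ℝ) + 1) * R))).toReal ^ q else 0

/-- The coarse multifractal moment function
`β_a(q) = inf{β : limsup_{r→0⁺} r^β Σ_{B ∈ B_r^*} μ(B̄^a)^q = 0}`.
(For the nonnegative quantity `r^β · Σ…`, vanishing of the `limsup` as `r → 0⁺`
is the same as convergence to `0`.) -/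
def betaA (μ : Measure ℝ) (a q : ℝ) : ℝ :=
  sInf {β : ℝ | Filter.Tendsto (fun R => R ^ β * gridSum μ a q R)
    (nhdsWithin 0 (Set.Ioi 0)) (nhds 0)}

/-- `F` is a "fractal subset" of `[0,1]`: compact, Lebesgue-null, containing `0` and `1`. -/
def IsFractalSubset (F : Set ℝ) : Prop :=
  IsCompact F ∧ F ⊆ Set.Icc 0 1 ∧ (0 : ℝ) ∈ F ∧ (1 : ℝ) ∈ F ∧ MeasureTheory.volume F = 0

/-- The complementary intervals `I_n = (l n, r n)` of `F` in `[0,1]`, enumerated with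
nonincreasing lengths. -/
structure FractalComplement (F : Set ℝ) where
  l : ℕ → ℝ
  r : ℕ → ℝ
  lt : ∀ n, l n < r n
  disj : Pairwise fun n m => Disjoint (Set.Ioo (l n) (r n)) (Set.Ioo (l m) (r m))
  union : (⋃ n, Set.Ioo (l n) (r n)) = Set.Icc (0 : ℝ) 1 \ F
  mono : ∀ n, r (n + 1) - l (n + 1) ≤ r n - l n

/-- The length `|I_n|` of the `n`-th complementary interval. -/
def FractalComplement.len {F : Set ℝ} (c : FractalComplement F) (n : ℕ) : ℝ := c.r n - c.l n

/-- The enlargement `Ī_n^a` of the closure of the complementary interval `I_n`. -/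
def FractalComplement.I {F : Set ℝ} (c : FractalComplement F) (a : ℝ) (n : ℕ) : Set ℝ :=
  enlarge a (c.l n) (c.r n)

/-- The lacunarity condition with constant `lam`: every interval `[x-r, x+r]` with `x ∈ F`
and `0 < r ≤ 1` contains a complementary interval of length at least `lam * r`. -/
def Lacunary {F : Set ℝ} (c : FractalComplement F) (lam : ℝ) : Prop :=
  ∀ x ∈ F, ∀ R : ℝ, 0 < R → R ≤ 1 → ∃ n,
    Set.Ioo (c.l n) (c.r n) ⊆ Set.Icc (x - R) (x + R) ∧ lam * R ≤ c.len n

/-- The topological support of `μ` is exactly `F`. -/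
def HasSupport (μ : Measure ℝ) (F : Set ℝ) : Prop :=
  μ Fᶜ = 0 ∧ ∀ x ∈ F, ∀ ε : ℝ, 0 < ε → 0 < μ (Set.Ioo (x - ε) (x + ε))


section Aux
-- Ioo subset Icc gives endpoint bounds
lemma ioo_sub_icc {l r a b : ℝ} (h : l < r) (hs : Set.Ioo l r ⊆ Set.Icc a b) :
    a ≤ l ∧ r ≤ b := by
  constructor
  · by_contra hc
    push_neg at hc
    set y := (l + min r a)/2 with hydef
    have h1 : l < min r a := lt_min h hc
    have hy : y ∈ Set.Ioo l r := by
      constructor <;> nlinarith [min_le_left r a]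
    have h2 := (hs hy).1
    nlinarith [min_le_right r a]
  · by_contra hc
    push_neg at hc
    have h3 : max l b < r := max_lt h hc
    set y := (max l b + r)/2 with hydef
    have hy : y ∈ Set.Ioo l r := by
      constructor <;> nlinarith [le_max_left l b]
    have h2 := (hs hy).2
    nlinarith [le_max_right l b]

-- endpoints in F
lemma endpoints_mem {F : Set ℝ} (c : FractalComplement F) (n : ℕ) :
    c.l n ∈ F ∧ c.r n ∈ F := by
  have hsub : Set.Ioo (c.l n) (c.r n) ⊆ Set.Icc (0:ℝ) 1 \ F := by
    rw [← c.union]; exact Set.subset_iUnion (fun m => Set.Ioo (c.l m) (c.r m)) n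
  have hbounds : (0:ℝ) ≤ c.l n ∧ c.r n ≤ 1 :=
    ioo_sub_icc (c.lt n) (fun y hy => (hsub hy).1)
  constructor
  · by_contra hc
    have hmem : c.l n ∈ Set.Icc (0:ℝ) 1 \ F :=
      ⟨⟨hbounds.1, le_trans (c.lt n).le hbounds.2⟩, hc⟩
    rw [← c.union] at hmem
    obtain ⟨m, hm⟩ := Set.mem_iUnion.mp hmem
    have hmn : m ≠ n := by
      rintro rfl; exact (lt_irrefl _ hm.1)
    -- point strictly between l n and min (r m) (r n)
    set y := (c.l n + min (c.r m) (c.r n))/2 with hy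
    have h1 : c.l n < min (c.r m) (c.r n) := lt_min hm.2 (c.lt n)
    have hy1 : y ∈ Set.Ioo (c.l n) (c.r n) := by
      constructor <;> [nlinarith [min_le_right (c.r m) (c.r n)]; nlinarith [min_le_right (c.r m) (c.r n)]]
    have hy2 : y ∈ Set.Ioo (c.l m) (c.r m) := by
      constructor <;> nlinarith [min_le_left (c.r m) (c.r n), hm.1]
    exact (c.disj hmn).ne_of_mem hy2 hy1 rfl
  · by_contra hc
    have hmem : c.r n ∈ Set.Icc (0:ℝ) 1 \ F :=
      ⟨⟨le_trans hbounds.1 (c.lt n).le, hbounds.2⟩, hc⟩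
    rw [← c.union] at hmem
    obtain ⟨m, hm⟩ := Set.mem_iUnion.mp hmem
    have hmn : m ≠ n := by
      rintro rfl; exact (lt_irrefl _ hm.2)
    set y := (max (c.l m) (c.l n) + c.r n)/2 with hy
    have h1 : max (c.l m) (c.l n) < c.r n := max_lt hm.1 (c.lt n)
    have hy1 : y ∈ Set.Ioo (c.l n) (c.r n) := by
      constructor <;> nlinarith [le_max_right (c.l m) (c.l n)]
    have hy2 : y ∈ Set.Ioo (c.l m) (c.r m) := by
      constructor <;> nlinarith [le_max_left (c.l m) (c.l n), hm.2]
    exact (c.disj hmn).ne_of_mem hy2 hy1 rfl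

lemma len_antitone {F : Set ℝ} (c : FractalComplement F) : Antitone c.len :=
  antitone_nat_of_succ_le c.mono

lemma len_pos {F : Set ℝ} (c : FractalComplement F) (n : ℕ) : 0 < c.len n :=
  sub_pos.mpr (c.lt n)

-- len n ≤ 1/(n+1)
lemma len_le {F : Set ℝ} (c : FractalComplement F) (n : ℕ) :
    (n + 1 : ℝ) * c.len n ≤ 1 := by
  have hdisj : (↑(Finset.range (n+1)) : Set ℕ).PairwiseDisjoint
      (fun m => Set.Ioo (c.l m) (c.r m)) := fun a _ b _ hab => c.disj hab
  have hmeas : ∀ b ∈ Finset.range (n+1), MeasurableSet (Set.Ioo (c.l b) (c.r b)) :=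
    fun b _ => measurableSet_Ioo
  have hsum := (measure_biUnion_finset hdisj hmeas (μ := volume)).symm
  have hsub : (⋃ b ∈ Finset.range (n+1), Set.Ioo (c.l b) (c.r b)) ⊆ Set.Icc (0:ℝ) 1 := by
    intro x hx
    simp only [Set.mem_iUnion] at hx
    obtain ⟨i, _, hi⟩ := hx
    have : Set.Ioo (c.l i) (c.r i) ⊆ Set.Icc (0:ℝ) 1 \ F := by
      rw [← c.union]; exact Set.subset_iUnion (fun m => Set.Ioo (c.l m) (c.r m)) i
    exact (this hi).1
  have hle : (∑ p ∈ Finset.range (n+1), volume (Set.Ioo (c.l p) (c.r p))) ≤ 1 := by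
    rw [hsum]
    calc volume (⋃ b ∈ Finset.range (n+1), Set.Ioo (c.l b) (c.r b))
        ≤ volume (Set.Icc (0:ℝ) 1) := measure_mono hsub
      _ = 1 := by simp
  have hterm : ∀ p ∈ Finset.range (n+1), ENNReal.ofReal (c.len n) ≤ volume (Set.Ioo (c.l p) (c.r p)) := by
    intro p hp
    rw [Real.volume_Ioo]
    exact ENNReal.ofReal_le_ofReal (len_antitone c (Nat.lt_succ_iff.mp (Finset.mem_range.mp hp)))
  have hge : (n+1 : ℕ) • ENNReal.ofReal (c.len n) ≤ 1 := by
    calc (n+1 : ℕ) • ENNReal.ofReal (c.len n)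
        = ∑ _p ∈ Finset.range (n+1), ENNReal.ofReal (c.len n) := by simp
      _ ≤ ∑ p ∈ Finset.range (n+1), volume (Set.Ioo (c.l p) (c.r p)) := Finset.sum_le_sum hterm
      _ ≤ 1 := hle
  have : ENNReal.ofReal ((n+1 : ℝ) * c.len n) ≤ ENNReal.ofReal 1 := by
    rw [ENNReal.ofReal_mul (by positivity), ENNReal.ofReal_one]
    calc ENNReal.ofReal (n+1:ℝ) * ENNReal.ofReal (c.len n) 
        = (n+1 : ℕ) • ENNReal.ofReal (c.len n) := by
          rw [nsmul_eq_mul]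
          congr 1
          rw [← ENNReal.ofReal_natCast]
          congr 1
          push_cast; ring
      _ ≤ 1 := hge
  rwa [ENNReal.ofReal_le_ofReal_iff one_pos.le] at this

section Tree
variable {F : Set ℝ} (c : FractalComplement F) {lam : ℝ}

/-- the chosen gap index -/
def pick (hlac : Lacunary c lam) (x : ℝ) (hx : x ∈ F) (R : ℝ) (h1 : 0 < R) (h2 : R ≤ 1) : ℕ :=
  (hlac x hx R h1 h2).choose

lemma pick_spec (hlac : Lacunary c lam) (x : ℝ) (hx : x ∈ F) (R : ℝ) (h1 : 0 < R) (h2 : R ≤ 1) :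
    Set.Ioo (c.l (pick c hlac x hx R h1 h2)) (c.r (pick c hlac x hx R h1 h2))
      ⊆ Set.Icc (x - R) (x + R) ∧ lam * R ≤ c.len (pick c hlac x hx R h1 h2) :=
  (hlac x hx R h1 h2).choose_spec

lemma sep_pos (hlam0 : 0 < lam) (k : ℕ) : 0 < (lam/4)^k := by positivity

lemma radius_pos (hlam0 : 0 < lam) (k : ℕ) : 0 < (lam/4)^k/4 := by positivity

lemma sep_le_one (hlam0 : 0 < lam) (hlam1 : lam ≤ 1) (k : ℕ) : (lam/4)^k ≤ 1 := by
  apply pow_le_one₀ (by positivity)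
  linarith

lemma radius_le_one (hlam0 : 0 < lam) (hlam1 : lam ≤ 1) (k : ℕ) : (lam/4)^k/4 ≤ 1 := by
  have := sep_le_one hlam0 hlam1 (lam := lam) k
  linarith

def pts (hlam0 : 0 < lam) (hlam1 : lam ≤ 1) (hlac : Lacunary c lam) (h0 : (0:ℝ) ∈ F) : List Bool → {x : ℝ // x ∈ F}
  | [] => ⟨0, h0⟩
  | b :: s =>
    let p := pts hlam0 hlam1 hlac h0 s
    let n := pick c hlac p.1 p.2 ((lam/4)^s.length/4) (radius_pos hlam0 _)
      (radius_le_one hlam0 hlam1 _)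
    if b then ⟨c.r n, (endpoints_mem c n).2⟩ else ⟨c.l n, (endpoints_mem c n).1⟩

/-- child is within the radius of the parent -/
lemma pts_close (hlam0 : 0 < lam) (hlam1 : lam ≤ 1) (hlac : Lacunary c lam) (h0 : (0:ℝ) ∈ F) (b : Bool) (s : List Bool) :
    |(pts c hlam0 hlam1 hlac h0 (b :: s)).1 - (pts c hlam0 hlam1 hlac h0 s).1|
      ≤ (lam/4)^s.length/4 := by
  set x := (pts c hlam0 hlam1 hlac h0 s).1
  set R := (lam/4)^s.length/4
  have hspec := pick_spec c hlac x (pts c hlam0 hlam1 hlac h0 s).2 R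
    (radius_pos hlam0 _) (radius_le_one hlam0 hlam1 _)
  set n := pick c hlac x (pts c hlam0 hlam1 hlac h0 s).2 R (radius_pos hlam0 _)
    (radius_le_one hlam0 hlam1 _)
  have hb := ioo_sub_icc (c.lt n) hspec.1
  have hltn := c.lt n
  have h1 : x - R ≤ c.l n := hb.1
  have h2 : c.r n ≤ x + R := hb.2
  cases b
  · have hval : (pts c hlam0 hlam1 hlac h0 (false :: s)).1 = c.l n := rfl
    rw [hval, abs_le]; constructor <;> linarith
  · have hval : (pts c hlam0 hlam1 hlac h0 (true :: s)).1 = c.r n := rfl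
    rw [hval, abs_le]; constructor <;> linarith

/-- separation of distinct points at the same stage -/
lemma pts_sep (hlam0 : 0 < lam) (hlam1 : lam ≤ 1) (hlac : Lacunary c lam) (h0 : (0:ℝ) ∈ F) :
    ∀ (s t : List Bool), s.length = t.length → s ≠ t →
      (lam/4)^s.length ≤ |(pts c hlam0 hlam1 hlac h0 s).1 - (pts c hlam0 hlam1 hlac h0 t).1| := by
  intro s
  induction s with
  | nil => intro t hlen hne; cases t with
    | nil => exact absurd rfl hne
    | cons b t => simp at hlen
  | cons a s ih =>
    intro t hlen hne
    cases t with
    | nil => simp at hlen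
    | cons b t =>
      simp only [List.length_cons, Nat.succ.injEq] at hlen
      by_cases hst : s = t
      · subst hst
        have hab : a ≠ b := by
          intro h; exact hne (by rw [h])
        -- same parent, different endpoints
        set x := (pts c hlam0 hlam1 hlac h0 s).1
        have hspec := pick_spec c hlac x (pts c hlam0 hlam1 hlac h0 s).2 ((lam/4)^s.length/4)
          (radius_pos hlam0 _) (radius_le_one hlam0 hlam1 _)
        set n := pick c hlac x (pts c hlam0 hlam1 hlac h0 s).2 ((lam/4)^s.length/4)
          (radius_pos hlam0 _) (radius_le_one hlam0 hlam1 _)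
        have hlen_ge : lam * ((lam/4)^s.length/4) ≤ c.len n := hspec.2
        have hvalf : (pts c hlam0 hlam1 hlac h0 (false :: s)).1 = c.l n := rfl
        have hvalt : (pts c hlam0 hlam1 hlac h0 (true :: s)).1 = c.r n := rfl
        have hltn := c.lt n
        have hkey : (lam/4)^(s.length+1) ≤ c.len n := by
          calc (lam/4)^(s.length+1) = (lam/4)^s.length * (lam/4) := by ring
            _ ≤ c.len n := by
                have := hlen_ge
                unfold FractalComplement.len at *
                nlinarith [sep_pos hlam0 (lam := lam) s.length]
        show (lam/4)^(s.length+1) ≤ _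
        have hlen' : c.len n = c.r n - c.l n := rfl
        cases a <;> cases b
        · exact absurd rfl hab
        · rw [hvalf, hvalt, abs_sub_comm, abs_of_pos (by linarith : (0:ℝ) < c.r n - c.l n)]
          linarith [hkey, hlen' ▸ hkey]
        · rw [hvalt, hvalf, abs_of_pos (by linarith : (0:ℝ) < c.r n - c.l n)]
          linarith [hlen' ▸ hkey]
        · exact absurd rfl hab
      · -- different parents
        have hsep := ih t hlen hst
        have hca := pts_close c hlam0 hlam1 hlac h0 a s
        have hcb := pts_close c hlam0 hlam1 hlac h0 b t
        rw [← hlen] at hcb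
        have habs := abs_sub_abs_le_abs_sub ((pts c hlam0 hlam1 hlac h0 s).1)
          ((pts c hlam0 hlam1 hlac h0 t).1)
        have hstep : (lam/4)^(s.length+1) ≤ (lam/4)^s.length / 2 := by
          have h1 : (lam/4)^(s.length+1) = (lam/4)^s.length * (lam/4) := by ring
          rw [h1]
          nlinarith [sep_pos hlam0 (lam := lam) s.length]
        show (lam/4)^(s.length+1) ≤ _
        have htri : |(pts c hlam0 hlam1 hlac h0 s).1 - (pts c hlam0 hlam1 hlac h0 t).1|
            ≤ |(pts c hlam0 hlam1 hlac h0 (a::s)).1 - (pts c hlam0 hlam1 hlac h0 (b::t)).1|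
              + (lam/4)^s.length/4 + (lam/4)^s.length/4 := by
          have h1 := abs_sub (pts c hlam0 hlam1 hlac h0 s).1 (pts c hlam0 hlam1 hlac h0 t).1
          calc |(pts c hlam0 hlam1 hlac h0 s).1 - (pts c hlam0 hlam1 hlac h0 t).1|
              ≤ |(pts c hlam0 hlam1 hlac h0 s).1 - (pts c hlam0 hlam1 hlac h0 (a::s)).1|
                + |(pts c hlam0 hlam1 hlac h0 (a::s)).1 - (pts c hlam0 hlam1 hlac h0 (b::t)).1|
                + |(pts c hlam0 hlam1 hlac h0 (b::t)).1 - (pts c hlam0 hlam1 hlac h0 t).1| := by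
                  have t1 := abs_sub_le (pts c hlam0 hlam1 hlac h0 s).1
                    (pts c hlam0 hlam1 hlac h0 (a::s)).1 (pts c hlam0 hlam1 hlac h0 t).1
                  have t2 := abs_sub_le (pts c hlam0 hlam1 hlac h0 (a::s)).1
                    (pts c hlam0 hlam1 hlac h0 (b::t)).1 (pts c hlam0 hlam1 hlac h0 t).1
                  linarith
            _ ≤ (lam/4)^s.length/4 + |(pts c hlam0 hlam1 hlac h0 (a::s)).1 - (pts c hlam0 hlam1 hlac h0 (b::t)).1| + (lam/4)^s.length/4 := by
                  rw [abs_sub_comm] at hca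
                  gcongr
            _ = _ := by ring
        linarith

lemma count_lemma (hlam0 : 0 < lam) (hlam1 : lam ≤ 1) (hlac : Lacunary c lam)
    (h0 : (0:ℝ) ∈ F) (k : ℕ) : ∀ n, n < 2^k → lam/2 * (lam/4)^k ≤ c.len n := by
  have hRpos : 0 < (lam/4)^k/2 := by have := sep_pos (lam := lam) hlam0 k; linarith
  have hRle1 : (lam/4)^k/2 ≤ 1 := by have := sep_le_one (lam := lam) hlam0 hlam1 k; linarith
  -- the map from boolean vectors to gap indices
  set P : (Fin k → Bool) → {x : ℝ // x ∈ F} :=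
    fun v => pts c hlam0 hlam1 hlac h0 (List.ofFn v) with hP
  set Φ : (Fin k → Bool) → ℕ :=
    fun v => pick c hlac (P v).1 (P v).2 ((lam/4)^k/2) hRpos hRle1 with hΦ
  have hΦspec : ∀ v, Set.Ioo (c.l (Φ v)) (c.r (Φ v))
      ⊆ Set.Icc ((P v).1 - (lam/4)^k/2) ((P v).1 + (lam/4)^k/2)
      ∧ lam * ((lam/4)^k/2) ≤ c.len (Φ v) :=
    fun v => pick_spec c hlac (P v).1 (P v).2 ((lam/4)^k/2) hRpos hRle1
  have hepts : ∀ v, (P v).1 - (lam/4)^k/2 ≤ c.l (Φ v) ∧ c.r (Φ v) ≤ (P v).1 + (lam/4)^k/2 :=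
    fun v => ioo_sub_icc (c.lt (Φ v)) (hΦspec v).1
  have hinj : Function.Injective Φ := by
    intro v w hvw
    by_contra hne
    have hlen : (List.ofFn v).length = (List.ofFn w).length := by simp
    have hlne : List.ofFn v ≠ List.ofFn w := fun h => hne (List.ofFn_injective h)
    have hsep := pts_sep c hlam0 hlam1 hlac h0 (List.ofFn v) (List.ofFn w) hlen hlne
    rw [List.length_ofFn] at hsep
    set y := (c.l (Φ v) + c.r (Φ v))/2 with hy
    have hyv1 : c.l (Φ v) < y := by have := c.lt (Φ v); simp only [hy]; linarith
    have hyv2 : y < c.r (Φ v) := by have := c.lt (Φ v); simp only [hy]; linarith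
    have hv := hepts v
    have hw := hepts w
    rw [← hvw] at hw
    have habs : |(P v).1 - (P w).1| < (lam/4)^k := by
      rw [abs_lt]; constructor <;> linarith [hv.1, hv.2, hw.1, hw.2]
    linarith
  intro n hn
  by_contra hcon
  push_neg at hcon
  have himg : (Finset.univ : Finset (Fin k → Bool)).image Φ ⊆ Finset.range n := by
    intro m hm
    obtain ⟨v, _, hv⟩ := Finset.mem_image.mp hm
    rw [Finset.mem_range]
    by_contra hge
    push_neg at hge
    have h1 : c.len m ≤ c.len n := len_antitone c hge
    have h2 : lam * ((lam/4)^k/2) ≤ c.len m := hv ▸ (hΦspec v).2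
    nlinarith
  have hcard : ((Finset.univ : Finset (Fin k → Bool)).image Φ).card = 2^k := by
    rw [Finset.card_image_of_injective _ hinj, Finset.card_univ]
    simp
  have := Finset.card_le_card himg
  rw [hcard, Finset.card_range] at this
  omega
end Tree

variable {F : Set ℝ} (c : FractalComplement F) {lam : ℝ}

-- upper eventual bound
lemma upper_bound : ∀ᶠ n : ℕ in atTop, Real.log (c.len n) / Real.log n ≤ -1 := by
  filter_upwards [eventually_ge_atTop 2] with n hn
  have hn' : (2:ℝ) ≤ n := by exact_mod_cast hn
  have hlogn : 0 < Real.log n := Real.log_pos (by linarith)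
  have hlen : c.len n ≤ 1/n := by
    have h1 := len_le c n
    have h2 := len_pos c n
    rw [le_div_iff₀ (by linarith : (0:ℝ) < (n:ℝ))]
    nlinarith
  have hlog : Real.log (c.len n) ≤ -Real.log n := by
    calc Real.log (c.len n) ≤ Real.log (1/n) := Real.log_le_log (len_pos c n) hlen
      _ = -Real.log n := by rw [one_div, Real.log_inv]
  rw [div_le_iff₀ hlogn]
  linarith

-- lower eventual bound
lemma lower_bound (hlam0 : 0 < lam) (hlam1 : lam ≤ 1) (hlac : Lacunary c lam) (h0 : (0:ℝ) ∈ F) :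
    ∀ᶠ n : ℕ in atTop, Real.log (lam/2) + Real.log (lam/4) + Real.log (lam/4)/Real.log 2
      ≤ Real.log (c.len n) / Real.log n := by
  filter_upwards [eventually_ge_atTop 3] with n hn
  have hn0 : n ≠ 0 := by omega
  have hn3 : (3:ℝ) ≤ n := by exact_mod_cast hn
  have hL1 : (1:ℝ) ≤ Real.log n := by
    have he3 : Real.exp 1 < 3 := by linarith [Real.exp_one_lt_d9]
    calc (1:ℝ) = Real.log (Real.exp 1) := (Real.log_exp 1).symm
      _ ≤ Real.log n := Real.log_le_log (Real.exp_pos 1) (by linarith)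
  have hLpos : (0:ℝ) < Real.log n := by linarith
  set k := Nat.log 2 n + 1 with hk
  have hnk : n < 2^k := Nat.lt_pow_succ_log_self one_lt_two n
  have hcount := count_lemma c hlam0 hlam1 hlac h0 k n hnk
  have hlam4pos : (0:ℝ) < lam/4 := by linarith
  have hlam2pos : (0:ℝ) < lam/2 := by linarith
  have hlog2pos : (0:ℝ) < Real.log 2 := Real.log_pos (by norm_num)
  have hloglam4 : Real.log (lam/4) ≤ 0 :=
    Real.log_nonpos (by linarith) (by linarith)
  have hloglam2 : Real.log (lam/2) ≤ 0 :=
    Real.log_nonpos (by linarith) (by linarith)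
  -- log of the length lower bound
  have hloglen : Real.log (lam/2) + (k:ℝ) * Real.log (lam/4) ≤ Real.log (c.len n) := by
    calc Real.log (lam/2) + (k:ℝ) * Real.log (lam/4)
        = Real.log (lam/2 * (lam/4)^k) := by
          rw [Real.log_mul (ne_of_gt hlam2pos) (ne_of_gt (pow_pos hlam4pos k)), Real.log_pow]
      _ ≤ Real.log (c.len n) := Real.log_le_log (by positivity) hcount
  -- bound on k
  have hkle : (k:ℝ) ≤ Real.log n / Real.log 2 + 1 := by
    have h2k : (2:ℝ)^(k-1) ≤ n := by
      have := Nat.pow_log_le_self 2 hn0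
      have hcast : ((2^(Nat.log 2 n) : ℕ) : ℝ) ≤ n := by exact_mod_cast this
      rw [hk, Nat.add_sub_cancel]
      simpa using hcast
    have hlog2k : ((k:ℝ) - 1) * Real.log 2 ≤ Real.log n := by
      have := Real.log_le_log (by positivity) h2k
      rw [Real.log_pow] at this
      have hkc : ((k-1 : ℕ):ℝ) = (k:ℝ) - 1 := by
        have : 1 ≤ k := by omega
        push_cast [Nat.cast_sub this]
        ring
      rw [hkc] at this
      exact this
    rw [← sub_le_iff_le_add, le_div_iff₀ hlog2pos]
    linarith
  have hkmul : (Real.log n / Real.log 2 + 1) * Real.log (lam/4) ≤ (k:ℝ) * Real.log (lam/4) :=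
    mul_le_mul_of_nonpos_right hkle hloglam4
  set A := Real.log (lam/2) + Real.log (lam/4) with hA
  set B := Real.log (lam/4) / Real.log 2 with hB
  have hBle : B ≤ 0 := by rw [hB]; exact div_nonpos_of_nonpos_of_nonneg hloglam4 hlog2pos.le
  have hAle : A ≤ 0 := by rw [hA]; linarith
  have hmain : A + B * Real.log n ≤ Real.log (c.len n) := by
    have hexp : (Real.log n / Real.log 2 + 1) * Real.log (lam/4)
        = B * Real.log n + Real.log (lam/4) := by
      rw [hB]; field_simp
    calc A + B * Real.log n = Real.log (lam/2) + ((Real.log n / Real.log 2 + 1) * Real.log (lam/4)) := by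
          rw [hA, hexp]; ring
      _ ≤ Real.log (lam/2) + (k:ℝ) * Real.log (lam/4) := by linarith
      _ ≤ Real.log (c.len n) := hloglen
  -- divide by log n
  have hdiv : (A + B * Real.log n) / Real.log n ≤ Real.log (c.len n) / Real.log n := by
    gcongr
  have hsimp : (A + B * Real.log n) / Real.log n = A / Real.log n + B := by
    rw [add_div, mul_div_cancel_right₀ _ (ne_of_gt hLpos)]
  have hAdiv : A ≤ A / Real.log n := by
    rw [le_div_iff₀ hLpos]
    nlinarith
  calc Real.log (lam/2) + Real.log (lam/4) + Real.log (lam/4)/Real.log 2 = A + B := by rw [hA, hB]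
    _ ≤ A / Real.log n + B := by linarith
    _ = (A + B * Real.log n) / Real.log n := hsimp.symm
    _ ≤ _ := hdiv

end Aux

/-- under the lacunarity condition,
`-∞ < liminf log|I_n|/log n ≤ limsup log|I_n|/log n ≤ -1`
(the first inequality being expressed as eventual boundedness below). -/
theorem stmt_8 (F : Set ℝ) (hF : IsFractalSubset F) (c : FractalComplement F)
    (lam : ℝ) (hlam0 : 0 < lam) (hlam1 : lam ≤ 1) (hlac : Lacunary c lam) :
    Filter.IsBoundedUnder (· ≥ ·) Filter.atTop
        (fun n : ℕ => Real.log (c.len n) / Real.log n) ∧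
    Filter.liminf (fun n : ℕ => Real.log (c.len n) / Real.log n) Filter.atTop ≤
      Filter.limsup (fun n : ℕ => Real.log (c.len n) / Real.log n) Filter.atTop ∧
    Filter.limsup (fun n : ℕ => Real.log (c.len n) / Real.log n) Filter.atTop ≤ -1 := by
  obtain ⟨-, -, h0, -, -⟩ := hF
  have hub := upper_bound c
  have hlb := lower_bound c hlam0 hlam1 hlac h0
  refine ⟨isBoundedUnder_of_eventually_ge hlb, ?_, ?_⟩
  · exact Filter.liminf_le_limsup (isBoundedUnder_of_eventually_le hub)
      (isBoundedUnder_of_eventually_ge hlb)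
  · exact Filter.limsup_le_of_le ((isBoundedUnder_of_eventually_ge hlb).isCoboundedUnder_le) hub
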